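/- Let a = (a_1, …, a_n) be a nonempty list of even integers with |a_1| ≥ 4, |a_i| ≥ 2 for all i, and such that no two consecutive entries both have absolute value 2. Then d([a]) = n. -/

import Mathlib

/-- The continued fraction value `[a₁, …, aₙ] = 1/(a₁ + 1/(a₂ + ⋯ + 1/aₙ))` of a
list of integers, defined recursively with `[] = 0`, using the total division of `ℚ`. -/
def cfVal : List ℤ → ℚ
  | [] => 0
  | a :: l => 1 / ((a : ℚ) + cfVal l)

/-- `u` and `v` are the two Farey parents of `x`: there are integers `a, b, c, d` with
`1 ≤ b, d`, `b + d = q`, `a + c = p`, `a·d − b·c = ±1`, `u = a/b` and `v = c/d`,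
where `x = p/q` in lowest terms. -/
def IsFareyParents (x u v : ℚ) : Prop :=
  ∃ a b c d : ℤ, 1 ≤ b ∧ 1 ≤ d ∧ b + d = (x.den : ℤ) ∧ a + c = x.num ∧
    (a * d - b * c = 1 ∨ a * d - b * c = -1) ∧
    u = (a : ℚ) / (b : ℚ) ∧ v = (c : ℚ) / (d : ℚ)

/-- The graph of the depth function on `ℚ`: integers have depth `0`, and otherwise
`d(x) = 1 + min(d(u), d(v))` where `u, v` are the two Farey parents of `x`. -/
inductive DepthRel : ℚ → ℕ → Prop
  | int (x : ℚ) (h : x.den = 1) : DepthRel x 0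
  | step (x u v : ℚ) (m k : ℕ) (h : x.den ≠ 1) (hp : IsFareyParents x u v)
      (hu : DepthRel u m) (hv : DepthRel v k) : DepthRel x (1 + min m k)

/-- The depth `d(x)` of a rational number. -/
noncomputable def fareyDepth (x : ℚ) : ℕ := sInf {n | DepthRel x n}

lemma num_le_den_of_abs_le_one {y : ℚ} (h : |y| ≤ 1) : |y.num| ≤ (y.den : ℤ) := by
  have hd : (0:ℚ) < (y.den : ℚ) := by exact_mod_cast y.pos
  have h1 : |(y.num : ℚ)| ≤ (y.den : ℚ) := by
    rw [← Rat.num_div_den y, abs_div, abs_of_pos hd, div_le_one hd] at h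
    exact h
  exact_mod_cast (by push_cast at h1 ⊢; exact h1 : ((|y.num| : ℤ) : ℚ) ≤ (y.den : ℚ))

lemma mul_den_eq_num (y : ℚ) : y * (y.den : ℚ) = (y.num : ℚ) := by
  have hd : ((y.den : ℚ)) ≠ 0 := by
    have : (0:ℚ) < (y.den : ℚ) := by exact_mod_cast y.pos
    exact this.ne'
  have h2 : (y.num:ℚ)/(y.den:ℚ) * (y.den:ℚ) = (y.num:ℚ) := div_mul_cancel₀ _ hd
  rw [Rat.num_div_den y] at h2
  exact h2

lemma rat_coprime (y : ℚ) : IsCoprime (y.den : ℤ) y.num := by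
  rw [Int.isCoprime_iff_gcd_eq_one]
  have := y.reduced
  simpa [Int.gcd, Nat.coprime_comm] using this.symm

lemma inv_num_den (a : ℤ) (y : ℚ) (σ : ℤ) (hσ : σ = 1 ∨ σ = -1)
    (h : 0 < σ * (a * y.den + y.num)) :
    (1/((a:ℚ)+y)).num = σ * y.den ∧ ((1/((a:ℚ)+y)).den : ℤ) = σ * (a * y.den + y.num) := by
  have hd : (0:ℚ) < (y.den : ℚ) := by exact_mod_cast y.pos
  have h0 := mul_den_eq_num y
  have hcop0 : IsCoprime ((y.den:ℤ)) (a * y.den + y.num) := by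
    have h' := (rat_coprime y).add_mul_left_right a
    rwa [(by ring : y.num + (y.den:ℤ) * a = a * y.den + y.num)] at h'
  have hcop : Nat.Coprime (σ * (y.den:ℤ)).natAbs (σ * (a * y.den + y.num)).natAbs := by
    have h1 : (σ * (y.den:ℤ)).natAbs = (y.den:ℤ).natAbs := by
      rw [Int.natAbs_mul]; rcases hσ with rfl | rfl <;> simp
    have h2 : (σ * (a * y.den + y.num)).natAbs = (a * y.den + y.num).natAbs := by
      rw [Int.natAbs_mul]; rcases hσ with rfl | rfl <;> simp
    rw [h1, h2]
    rw [Int.isCoprime_iff_gcd_eq_one] at hcop0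
    exact hcop0
  have key : 1/((a:ℚ)+y) = ((σ * y.den : ℤ) : ℚ) / ((σ * (a * y.den + y.num) : ℤ) : ℚ) := by
    have hNne : ((σ * y.den : ℤ) : ℚ) ≠ 0 := by
      rcases hσ with rfl | rfl <;> push_cast <;>
        simp [hd.ne']
    have hay : ((a:ℚ) + y) = ((σ * (a * y.den + y.num) : ℤ) : ℚ) / ((σ * y.den : ℤ) : ℚ) := by
      rw [eq_div_iff hNne]
      rcases hσ with rfl | rfl <;> push_cast
      · linear_combination h0
      · linear_combination -h0
    rw [hay, one_div_div]
  constructor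
  · rw [key]; exact Rat.num_div_eq_of_coprime h hcop
  · rw [key]; exact Rat.den_div_eq_of_coprime h hcop

lemma abs_int_le_of_div_abs_le_one {A B : ℤ} (hB : 1 ≤ B) {u : ℚ}
    (huv : u = (A:ℚ)/(B:ℚ)) (hu : |u| ≤ 1) : |A| ≤ B := by
  have hBq : (0:ℚ) < (B:ℚ) := by exact_mod_cast hB
  rw [huv, abs_div, abs_of_pos hBq, div_le_one hBq] at hu
  have : |(A:ℚ)| = ((|A| : ℤ) : ℚ) := by push_cast; ring
  rw [this] at hu
  exact_mod_cast hu

lemma lift_val (a A B : ℤ) (σ : ℤ) (hσ0 : (σ:ℚ) ≠ 0) (hB : 1 ≤ B) (hden : a * B + A ≠ 0) :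
    1/((a:ℚ) + (A:ℚ)/(B:ℚ)) = ((σ * B : ℤ) : ℚ) / ((σ * (a * B + A) : ℤ) : ℚ) := by
  have hB0 : ((B:ℚ)) ≠ 0 := by exact_mod_cast (by omega : B ≠ 0)
  have h1 : (a:ℚ) + (A:ℚ)/(B:ℚ) = (((a*B+A : ℤ)):ℚ)/((B:ℚ)) := by
    push_cast; field_simp
  rw [h1, one_div_div]
  push_cast
  rw [mul_div_mul_left _ _ hσ0]

lemma farey_lift (a : ℤ) (ha : 2 ≤ |a|) {y u v : ℚ} (hy : |y| ≤ 1) (hu : |u| ≤ 1) (hv : |v| ≤ 1)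
    (hp : IsFareyParents y u v) :
    IsFareyParents (1/((a:ℚ)+y)) (1/((a:ℚ)+u)) (1/((a:ℚ)+v)) := by
  obtain ⟨A, B, C, D, hB, hD, hBD, hAC, hdet, huv, hvv⟩ := hp
  have hyd : 1 ≤ (y.den : ℤ) := by exact_mod_cast y.pos
  have hnum := num_le_den_of_abs_le_one hy
  have hnum1 : -(y.den:ℤ) ≤ y.num := neg_le_of_abs_le hnum
  have hnum2 : y.num ≤ (y.den:ℤ) := le_of_abs_le hnum
  have hA1 : -B ≤ A := neg_le_of_abs_le (abs_int_le_of_div_abs_le_one hB huv hu)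
  have hA2 : A ≤ B := le_of_abs_le (abs_int_le_of_div_abs_le_one hB huv hu)
  have hC1 : -D ≤ C := neg_le_of_abs_le (abs_int_le_of_div_abs_le_one hD hvv hv)
  have hC2 : C ≤ D := le_of_abs_le (abs_int_le_of_div_abs_le_one hD hvv hv)
  have hsgn : 2 ≤ a ∨ a ≤ -2 := by rcases abs_cases a with ⟨h1, h2⟩ | ⟨h1, h2⟩ <;> omega
  obtain ⟨σ, hσ, haσ⟩ : ∃ σ : ℤ, (σ = 1 ∨ σ = -1) ∧ 2 ≤ σ * a := by
    rcases hsgn with h' | h'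
    · exact ⟨1, Or.inl rfl, by omega⟩
    · exact ⟨-1, Or.inr rfl, by omega⟩
  have hσσ : σ * σ = 1 := by rcases hσ with rfl | rfl <;> norm_num
  have hσ0 : ((σ:ℤ):ℚ) ≠ 0 := by
    exact_mod_cast (by rcases hσ with rfl | rfl <;> omega : σ ≠ 0)
  have hDpos : 0 < σ * (a * y.den + y.num) := by
    rcases hσ with rfl | rfl <;> nlinarith
  obtain ⟨hxnum, hxden⟩ := inv_num_den a y σ hσ hDpos
  have hBpos : 1 ≤ σ * (a * B + A) := by rcases hσ with rfl | rfl <;> nlinarith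
  have hDpos' : 1 ≤ σ * (a * D + C) := by rcases hσ with rfl | rfl <;> nlinarith
  have hBne : a * B + A ≠ 0 := by rcases hσ with rfl | rfl <;> omega
  have hDne : a * D + C ≠ 0 := by rcases hσ with rfl | rfl <;> omega
  refine ⟨σ * B, σ * (a * B + A), σ * D, σ * (a * D + C), hBpos, hDpos', ?_, ?_, ?_, ?_, ?_⟩
  · rw [hxden]; linear_combination σ * a * hBD + σ * hAC
  · rw [hxnum]; linear_combination σ * hBD
  · rcases hdet with h' | h'
    · right; linear_combination (B*C - A*D) * hσσ - h'
    · left; linear_combination (B*C - A*D) * hσσ - h'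
  · rw [huv]; exact lift_val a A B σ hσ0 hB hBne
  · rw [hvv]; exact lift_val a C D σ hσ0 hD hDne

lemma sign_facts (c : ℤ) (hc : 2 ≤ |c|) : (2 ≤ c ∧ c.sign = 1) ∨ (c ≤ -2 ∧ c.sign = -1) := by
  rcases abs_cases c with ⟨h1, h2⟩ | ⟨h1, h2⟩
  · left; refine ⟨by omega, Int.sign_eq_one_of_pos (by omega)⟩
  · right; refine ⟨by omega, Int.sign_eq_neg_one_of_neg (by omega)⟩

lemma cf_bound : ∀ (l : List ℤ), (∀ x ∈ l.dropLast, 2 ≤ |x|) → (∀ x ∈ l, 1 ≤ |x|) →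
    |cfVal l| ≤ 1 := by
  intro l
  induction l with
  | nil => intro _ _; simp [cfVal]
  | cons a l ih =>
    intro h1 h2
    match l with
    | [] =>
      have ha : (1:ℤ) ≤ |a| := h2 a (by simp)
      have ha' : (1:ℚ) ≤ |(a:ℚ)| := by exact_mod_cast (by push_cast; exact_mod_cast ha : ((1:ℤ):ℚ) ≤ ((|a|:ℤ):ℚ))
      show |1/((a:ℚ) + cfVal [])| ≤ 1
      simp only [cfVal, add_zero, one_div]
      rw [abs_inv]
      exact inv_le_one_of_one_le₀ ha'
    | b :: l' =>
      have ha : (2:ℤ) ≤ |a| := h1 a (by simp [List.dropLast_cons₂])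
      have ht := ih (fun x hx => h1 x (by simp [List.dropLast_cons₂]; right; exact hx))
        (fun x hx => h2 x (by simp at hx ⊢; tauto))
      set t := cfVal (b :: l') with hts
      have ha' : (2:ℚ) ≤ |(a:ℚ)| := by exact_mod_cast (Int.cast_le.mpr ha : ((2:ℤ):ℚ) ≤ ((|a|:ℤ):ℚ))
      have habs : (1:ℚ) ≤ |(a:ℚ) + t| := by
        have := abs_add_le ((a:ℚ) + t) (-t)
        simp only [add_neg_cancel_right, abs_neg] at this
        linarith
      show |1/((a:ℚ) + t)| ≤ 1
      rw [one_div, abs_inv]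
      exact inv_le_one_of_one_le₀ habs

lemma cf_den2 : ∀ (l : List ℤ), l ≠ [] → (∀ x ∈ l, 2 ≤ |x|) → 2 ≤ ((cfVal l).den : ℤ) := by
  intro l
  induction l with
  | nil => intro h; exact absurd rfl h
  | cons a l ih =>
    intro _ h2
    have ha : (2:ℤ) ≤ |a| := h2 a (by simp)
    obtain ⟨σ, hσ, haσ⟩ : ∃ σ : ℤ, (σ = 1 ∨ σ = -1) ∧ 2 ≤ σ * a := by
      rcases sign_facts a ha with ⟨h', _⟩ | ⟨h', _⟩
      · exact ⟨1, Or.inl rfl, by omega⟩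
      · exact ⟨-1, Or.inr rfl, by omega⟩
    match l with
    | [] =>
      show 2 ≤ ((1/((a:ℚ) + cfVal [])).den : ℤ)
      have h0 : cfVal [] = 0 := rfl
      rw [h0, show ((0:ℚ)) = (0:ℚ) from rfl]
      have := (inv_num_den a 0 σ hσ (by
        have h1 : ((0:ℚ)).den = 1 ∧ ((0:ℚ)).num = 0 := ⟨rfl, rfl⟩
        rw [h1.1, h1.2]
        have h2 : σ * (a * ((1:ℕ):ℤ) + 0) = σ * a := by push_cast; ring
        rw [h2]; omega)).2
      rw [this]
      have h1 : ((0:ℚ)).den = 1 ∧ ((0:ℚ)).num = 0 := ⟨rfl, rfl⟩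
      rw [h1.1, h1.2]
      have h2 : σ * (a * ((1:ℕ):ℤ) + 0) = σ * a := by push_cast; ring
      rw [h2]; omega
    | b :: l' =>
      set y := cfVal (b :: l') with hys
      have hyden : 2 ≤ ((y).den : ℤ) := ih (by simp) (fun x hx => h2 x (by simp at hx ⊢; tauto))
      have hybnd : |y| ≤ 1 := cf_bound (b :: l')
        (fun x hx => h2 x (by simp at hx ⊢; right; exact List.dropLast_subset _ hx |> fun h => by simpa using h))
        (fun x hx => by have := h2 x (by simp at hx ⊢; tauto); omega)
      have hnum := num_le_den_of_abs_le_one hybnd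
      have hDpos : 0 < σ * (a * y.den + y.num) := by
        rcases hσ with rfl | rfl <;> rcases abs_cases y.num with ⟨u1,u2⟩|⟨u1,u2⟩ <;> nlinarith
      have := (inv_num_den a y σ hσ hDpos).2
      show 2 ≤ ((1/((a:ℚ) + y)).den : ℤ)
      rw [this]
      rcases hσ with rfl | rfl <;> rcases abs_cases y.num with ⟨u1,u2⟩|⟨u1,u2⟩ <;> nlinarith

lemma cf_collapse (t : List ℤ) (b e : ℤ) (he : e = 1 ∨ e = -1) :
    cfVal (t ++ [b, e]) = cfVal (t ++ [b + e]) := by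
  induction t with
  | nil =>
    show 1/((b:ℚ) + (1/((e:ℚ) + cfVal []))) = 1/(((b+e : ℤ):ℚ) + cfVal [])
    have h0 : cfVal [] = 0 := rfl
    rcases he with rfl | rfl <;> rw [h0] <;> push_cast <;> norm_num
  | cons a t ih =>
    show 1/((a:ℚ) + cfVal (t ++ [b, e])) = 1/((a:ℚ) + cfVal (t ++ [b+e]))
    rw [ih]

lemma cf_parents : ∀ (p : List ℤ) (c : ℤ), (∀ x ∈ p, 2 ≤ |x|) → 2 ≤ |c| →
    IsFareyParents (cfVal (p ++ [c])) (cfVal p) (cfVal (p ++ [c - c.sign])) := by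
  intro p
  induction p with
  | nil =>
    intro c _ hc
    have h0 : cfVal [] = 0 := rfl
    rcases sign_facts c hc with ⟨h1, h2⟩ | ⟨h1, h2⟩
    · -- c ≥ 2
      have hd := inv_num_den c 0 1 (Or.inl rfl) (by
        have e1 : ((0:ℚ)).den = 1 ∧ ((0:ℚ)).num = 0 := ⟨rfl, rfl⟩
        rw [e1.1, e1.2]; push_cast; omega)
      have e1 : ((0:ℚ)).den = 1 ∧ ((0:ℚ)).num = 0 := ⟨rfl, rfl⟩
      rw [e1.1, e1.2] at hd
      have hx : cfVal ([] ++ [c]) = 1/((c:ℚ) + 0) := by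
        show 1/((c:ℚ) + cfVal []) = _; rw [h0]
      refine ⟨0, 1, 1, c - 1, le_refl 1, by omega, ?_, ?_, ?_, by simp [h0], ?_⟩
      · rw [hx, hd.2]; push_cast; ring
      · rw [hx, hd.1]; push_cast; try ring
      · right; ring
      · rw [h2]
        show cfVal [c-1] = _
        show 1/(((c-1:ℤ):ℚ) + cfVal []) = _
        rw [h0, add_zero, one_div]
        rw [eq_div_iff (by exact_mod_cast (by omega : (c:ℤ) - 1 ≠ 0))]
        push_cast
        rw [inv_mul_cancel₀ (by exact_mod_cast (by omega : (c:ℤ) - 1 ≠ 0))]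
    · -- c ≤ -2
      have hd := inv_num_den c 0 (-1) (Or.inr rfl) (by
        have e1 : ((0:ℚ)).den = 1 ∧ ((0:ℚ)).num = 0 := ⟨rfl, rfl⟩
        rw [e1.1, e1.2]; push_cast; omega)
      have e1 : ((0:ℚ)).den = 1 ∧ ((0:ℚ)).num = 0 := ⟨rfl, rfl⟩
      rw [e1.1, e1.2] at hd
      have hx : cfVal ([] ++ [c]) = 1/((c:ℚ) + 0) := by
        show 1/((c:ℚ) + cfVal []) = _; rw [h0]
      refine ⟨0, 1, -1, -c - 1, le_refl 1, by omega, ?_, ?_, ?_, by simp [h0], ?_⟩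
      · rw [hx, hd.2]; push_cast; ring
      · rw [hx, hd.1]; push_cast; try ring
      · left; ring
      · rw [h2]
        show cfVal [c+1] = _
        show 1/(((c - -1:ℤ):ℚ) + cfVal []) = _
        rw [h0, add_zero, one_div]
        rw [eq_div_iff (by exact_mod_cast (by omega : -(c:ℤ) - 1 ≠ 0))]
        push_cast
        have hne : (-(c:ℚ) - 1) ≠ 0 := by
          exact_mod_cast (by omega : -(c:ℤ) - 1 ≠ 0)
        rw [show ((c:ℚ) - -1) = -(-(c:ℚ) - 1) by ring, inv_neg, neg_mul,
          inv_mul_cancel₀ hne]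
  | cons a p ih =>
    intro c hp hc
    have ha : 2 ≤ |a| := hp a (by simp)
    have hrec := ih c (fun x hx => hp x (by simp [hx])) hc
    have hcs : 1 ≤ |c - c.sign| := by
      rcases sign_facts c hc with ⟨h1, h2⟩ | ⟨h1, h2⟩ <;> rw [h2] <;>
        rcases abs_cases (c - 1) with ⟨u1,u2⟩|⟨u1,u2⟩ <;>
        rcases abs_cases (c - -1) with ⟨v1,v2⟩|⟨v1,v2⟩ <;> omega
    have hy : |cfVal (p ++ [c])| ≤ 1 := cf_bound _
      (by rw [List.dropLast_concat]; exact fun x hx => hp x (by simp [hx]))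
      (by intro x hx; rcases List.mem_append.mp hx with h' | h'
          · have := hp x (by simp [h']); omega
          · simp at h'; subst h'; linarith [hc])
    have hu : |cfVal p| ≤ 1 := cf_bound _
      (fun x hx => hp x (by simp; right; exact List.dropLast_subset _ hx))
      (fun x hx => by have := hp x (by simp [hx]); omega)
    have hv : |cfVal (p ++ [c - c.sign])| ≤ 1 := cf_bound _
      (by rw [List.dropLast_concat]; exact fun x hx => hp x (by simp [hx]))
      (by intro x hx; rcases List.mem_append.mp hx with h' | h'
          · have := hp x (by simp [h']); omega
          · simp at h'; subst h'; exact hcs)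
    exact farey_lift a ha hy hu hv hrec

lemma rat_coprime' (y : ℚ) : IsCoprime y.num (y.den : ℤ) := by
  rw [Int.isCoprime_iff_gcd_eq_one]
  exact y.reduced

/-- key uniqueness step -/
lemma farey_solution_unique {P Q A₁ B₁ A₂ B₂ : ℤ} (hcop : IsCoprime P Q)
    (hB₁ : 1 ≤ B₁) (hB₁' : B₁ ≤ Q - 1) (hB₂ : 1 ≤ B₂) (hB₂' : B₂ ≤ Q - 1)
    (h : A₁ * Q - B₁ * P = A₂ * Q - B₂ * P) : A₁ = A₂ ∧ B₁ = B₂ := by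
  have hQ : 0 < Q := by omega
  have hdvd : Q ∣ (B₁ - B₂) * P := ⟨A₁ - A₂, by linarith [h]⟩
  have hdvd2 : Q ∣ (B₁ - B₂) := (hcop.symm).dvd_of_dvd_mul_right hdvd
  have hBeq : B₁ = B₂ := by
    rcases hdvd2 with ⟨k, hk⟩
    have : k = 0 := by
      rcases lt_trichotomy k 0 with h' | h' | h'
      · nlinarith
      · exact h'
      · nlinarith
    subst this
    simp at hk
    omega
  subst hBeq
  constructor
  · have : (A₁ - A₂) * Q = 0 := by linarith
    have := mul_eq_zero.mp this
    omega
  · rfl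

lemma parents_unique {x u v u' v' : ℚ} (h1 : IsFareyParents x u v)
    (h2 : IsFareyParents x u' v') : (u = u' ∧ v = v') ∨ (u = v' ∧ v = u') := by
  obtain ⟨A, B, C, D, hB, hD, hBD, hAC, hdet, hu, hv⟩ := h1
  obtain ⟨A', B', C', D', hB', hD', hBD', hAC', hdet', hu', hv'⟩ := h2
  set Q : ℤ := (x.den : ℤ) with hQ
  set P : ℤ := x.num with hP
  have hcop : IsCoprime P Q := rat_coprime' x
  have e1 : A * Q - B * P = A * D - B * C := by linear_combination A * hBD.symm - B * hAC.symm + 0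
  have e2 : A' * Q - B' * P = A' * D' - B' * C' := by
    linear_combination A' * hBD'.symm - B' * hAC'.symm
  have e3 : C' * Q - D' * P = -(A' * D' - B' * C') := by
    linear_combination C' * hBD'.symm - D' * hAC'.symm
  have key : ∀ {X₁ Y₁ X₂ Y₂ : ℤ}, 1 ≤ Y₁ → Y₁ ≤ Q - 1 → 1 ≤ Y₂ → Y₂ ≤ Q - 1 →
      X₁ * Q - Y₁ * P = X₂ * Q - Y₂ * P → X₁ = X₂ ∧ Y₁ = Y₂ :=
    fun hb1 hb2 hb3 hb4 h => farey_solution_unique hcop hb1 hb2 hb3 hb4 h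
  rcases hdet with hd1 | hd1 <;> rcases hdet' with hd2 | hd2
  · -- both +1 : same
    have := key hB (by omega) hB' (by omega) (by rw [e1, e2, hd1, hd2])
    left
    constructor
    · rw [hu, hu', this.1, this.2]
    · rw [hv, hv']
      have hC : C = C' := by omega
      have hDe : D = D' := by omega
      rw [hC, hDe]
  · -- det = +1, det' = -1: u matches v'
    have := key hB (by omega) hD' (by omega) (by rw [e1, e3, hd1, hd2]; ring)
    right
    constructor
    · rw [hu, hv', this.1, this.2]
    · rw [hv, hu']
      have hC : C = A' := by omega
      have hDe : D = B' := by omega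
      rw [hC, hDe]
  · -- det = -1, det' = +1
    have e3' : C * Q - D * P = -(A * D - B * C) := by
      linear_combination C * hBD.symm - D * hAC.symm
    have := key hD (by omega) hB' (by omega) (by rw [e3', e2, hd1, hd2]; ring)
    right
    constructor
    · rw [hu, hv']
      have : A = C' := by omega
      have h2 : B = D' := by omega
      rw [this, h2]
    · rw [hv, hu', this.1, this.2]
  · -- both -1
    have := key hB (by omega) hB' (by omega) (by rw [e1, e2, hd1, hd2])
    left
    constructor
    · rw [hu, hu', this.1, this.2]
    · rw [hv, hv']
      have hC : C = C' := by omega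
      have hDe : D = D' := by omega
      rw [hC, hDe]

lemma depthRel_unique {x : ℚ} {n : ℕ} (h : DepthRel x n) :
    ∀ m, DepthRel x m → m = n := by
  induction h with
  | int x h =>
    intro m hm
    cases hm with
    | int => rfl
    | step _ _ _ _ _ h' => exact absurd h h'
  | step x u v m k h hp hu hv ihu ihv =>
    intro m' hm'
    cases hm' with
    | int _ h'' => exact absurd h'' h
    | step _ u' v' m₂ k₂ h₂ hp₂ hu₂ hv₂ =>
      rcases parents_unique hp₂ hp with ⟨e1, e2⟩ | ⟨e1, e2⟩
      · rw [ihu m₂ (e1 ▸ hu₂), ihv k₂ (e2 ▸ hv₂)]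
      · rw [ihv m₂ (e1 ▸ hu₂), ihu k₂ (e2 ▸ hv₂), Nat.min_comm]

lemma fareyDepth_eq {x : ℚ} {n : ℕ} (h : DepthRel x n) : fareyDepth x = n := by
  have hset : {m | DepthRel x m} = {n} := by
    ext m
    simp only [Set.mem_setOf_eq, Set.mem_singleton_iff]
    exact ⟨fun hm => depthRel_unique h m hm, fun hm => hm ▸ h⟩
  rw [fareyDepth, hset, csInf_singleton]

lemma abs_eq_natAbs' (x : ℤ) : |x| = (x.natAbs : ℤ) := Int.abs_eq_natAbs x

lemma dr_zero : DepthRel (cfVal []) 0 := by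
  have : cfVal [] = 0 := rfl
  rw [this]
  exact DepthRel.int 0 rfl

lemma dr_pm_one (s : ℤ) (hs : s = 1 ∨ s = -1) : DepthRel (cfVal [s]) 0 := by
  have h : cfVal [s] = (s : ℚ) := by
    show 1/((s:ℚ) + cfVal []) = (s:ℚ)
    have h0 : cfVal [] = 0 := rfl
    rcases hs with rfl | rfl <;> rw [h0] <;> norm_num
  rw [h]
  apply DepthRel.int
  rcases hs with rfl | rfl <;> rfl

lemma chainOk {q : List ℤ} {b : ℤ}
    (hch : List.Chain' (fun a b => ¬(|a| = 2 ∧ |b| = 2)) (q ++ [b]))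
    (hb2 : b.natAbs = 2) : ¬(b.natAbs = 2 ∧ q.getLast? = some (-b)) := by
  rintro ⟨_, hlast⟩
  simp only [List.Chain', List.isChain_append] at hch
  obtain ⟨_, _, hjun⟩ := hch
  have := hjun (-b) hlast b (by simp)
  apply this
  constructor
  · rw [abs_eq_natAbs', Int.natAbs_neg, hb2]; norm_num
  · rw [abs_eq_natAbs', hb2]; norm_num

lemma concat_cases (l : List ℤ) : l = [] ∨ ∃ q b, l = q ++ [b] := by
  rcases List.eq_nil_or_concat l with h | ⟨q, b, h⟩
  · exact Or.inl h
  · exact Or.inr ⟨q, b, by rw [h, List.concat_eq_append]⟩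

theorem mainA : ∀ (N : ℕ) (p : List ℤ) (c : ℤ),
    (p.map Int.natAbs).sum + c.natAbs + p.length ≤ N →
    (∀ x ∈ p, Even x ∧ 2 ≤ |x|) →
    List.Chain' (fun a b => ¬(|a| = 2 ∧ |b| = 2)) p →
    2 ≤ |c| →
    DepthRel (cfVal (p ++ [c]))
      (if c.natAbs = 2 ∧ p.getLast? = some (-c) then p.length else p.length + 1) := by
  intro N
  induction N using Nat.strong_induction_on with
  | _ N ih =>
  intro p c hN hev hch hc
  have hcn : 2 ≤ c.natAbs := by
    have := hc; rw [abs_eq_natAbs'] at this; exact_mod_cast this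
  have habs2 : ∀ x ∈ p, 2 ≤ |x| := fun x hx => (hev x hx).2
  have hpar := cf_parents p c habs2 hc
  have hden : (cfVal (p ++ [c])).den ≠ 1 := by
    have := cf_den2 (p ++ [c]) (by simp) (by
      intro x hx
      rcases List.mem_append.mp hx with h' | h'
      · exact habs2 x h'
      · simp at h'; subst h'; exact hc)
    omega
  have hsgn := sign_facts c hc
  -- facts about c - c.sign
  have hcsub : (c - c.sign).natAbs = c.natAbs - 1 := by
    rcases hsgn with ⟨h1, h2⟩ | ⟨h1, h2⟩ <;> rw [h2] <;> omega
  rcases concat_cases p with rfl | ⟨q, b, rfl⟩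
  · -- p = []
    rw [if_neg (by simp)]
    have hu : DepthRel (cfVal ([] : List ℤ)) 0 := dr_zero
    obtain ⟨k, hv⟩ : ∃ k, DepthRel (cfVal ([] ++ [c - c.sign])) k := by
      by_cases h3 : c.natAbs = 2
      · refine ⟨0, ?_⟩
        have hcs : c - c.sign = 1 ∨ c - c.sign = -1 := by
          rcases hsgn with ⟨h1, h2⟩ | ⟨h1, h2⟩ <;> rw [h2] <;> omega
        simpa using dr_pm_one (c - c.sign) hcs
      · refine ⟨1, ?_⟩
        have h4 : 2 ≤ |c - c.sign| := by
          rw [abs_eq_natAbs']; exact_mod_cast (by omega : 2 ≤ (c - c.sign).natAbs)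
        have := ih (N - 1) (by omega) [] (c - c.sign) (by simp; omega) (by simp) List.isChain_nil h4
        rw [if_neg (by simp)] at this
        simpa using this
    have hstep := DepthRel.step _ _ _ 0 k hden hpar hu hv
    have : 1 + min 0 k = (0:ℕ) + 1 := by omega
    rw [this] at hstep
    simpa using hstep
  · -- p = q ++ [b]
    have hbm : b ∈ q ++ [b] := by simp
    have hb_even : Even b := (hev b hbm).1
    have hb_dvd : (2:ℤ) ∣ b := hb_even.two_dvd
    have hb2 : 2 ≤ b.natAbs := by
      have := (hev b hbm).2; rw [abs_eq_natAbs'] at this; exact_mod_cast this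
    have hsum : ((q ++ [b]).map Int.natAbs).sum = (q.map Int.natAbs).sum + b.natAbs := by
      simp
    have hlen : (q ++ [b]).length = q.length + 1 := by simp
    have hevq : ∀ x ∈ q, Even x ∧ 2 ≤ |x| := fun x hx => hev x (by simp [hx])
    have hchq : List.Chain' (fun a b => ¬(|a| = 2 ∧ |b| = 2)) q := by
      simp only [List.Chain', List.isChain_append] at hch; exact hch.1
    -- depth of first parent
    have hu : DepthRel (cfVal (q ++ [b])) (q.length + 1) := by
      have hb' : 2 ≤ |b| := (hev b hbm).2
      have := ih (N - 1) (by omega) q b (by rw [hsum, hlen] at hN; omega) hevq hchq hb'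
      by_cases hq2 : b.natAbs = 2
      · rw [if_neg (chainOk hch hq2)] at this; exact this
      · rw [if_neg (by tauto)] at this; exact this
    by_cases hc2 : c.natAbs = 2
    · -- |c| = 2
      have hcs : c - c.sign = 1 ∨ c - c.sign = -1 := by
        rcases hsgn with ⟨h1, h2⟩ | ⟨h1, h2⟩ <;> rw [h2] <;> omega
      have hlist : (q ++ [b]) ++ [c - c.sign] = q ++ [b, c - c.sign] := by
        rw [List.append_assoc]; rfl
      have hcol : cfVal ((q ++ [b]) ++ [c - c.sign]) = cfVal (q ++ [b + (c - c.sign)]) := by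
        rw [hlist]; exact cf_collapse q b (c - c.sign) hcs
      by_cases hbad : b = -c
      · -- exceptional case
        have hbc : b + (c - c.sign) = -c.sign := by omega
        rw [if_pos ⟨hc2, by rw [List.getLast?_concat, hbad]⟩]
        rcases concat_cases q with rfl | ⟨r, e, rfl⟩
        · -- q = []
          have hv : DepthRel (cfVal (([b] : List ℤ) ++ [c - c.sign])) 0 := by
            rw [show ([b] : List ℤ) ++ [c - c.sign] = ([] : List ℤ) ++ [b, c - c.sign] by rfl,
              cf_collapse [] b (c - c.sign) hcs, hbc]
            have hcsgn : -c.sign = 1 ∨ -c.sign = -1 := by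
              rcases hsgn with ⟨_, h2⟩ | ⟨_, h2⟩ <;> rw [h2] <;> omega
            simpa using dr_pm_one (-c.sign) hcsgn
          have hstep := DepthRel.step _ _ _ (([] : List ℤ).length + 1) 0 hden hpar hu hv
          have : 1 + min (([] : List ℤ).length + 1) 0 = ([] ++ [b] : List ℤ).length := by simp
          rw [this] at hstep
          exact hstep
        · -- q = r ++ [e]
          have hem : e ∈ (r ++ [e]) ++ [b] := by simp
          have he_even : Even e := (hev e hem).1
          have he2 : 2 ≤ e.natAbs := by
            have := (hev e hem).2; rw [abs_eq_natAbs'] at this; exact_mod_cast this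
          have hene2 : e.natAbs ≠ 2 := by
            intro hee
            simp only [List.Chain', List.isChain_append] at hch
            have hj := hch.2.2 e (by rw [List.getLast?_concat]; rfl) b (by simp)
            have hbn : b.natAbs = 2 := by omega
            exact hj ⟨by rw [abs_eq_natAbs', hee]; norm_num, by rw [abs_eq_natAbs', hbn]; norm_num⟩
          have he4 : 4 ≤ e.natAbs := by
            have : (2:ℤ) ∣ e := he_even.two_dvd
            omega
          have hlist2 : (r ++ [e]) ++ [b + (c - c.sign)] = r ++ [e, b + (c-c.sign)] := by
            rw [List.append_assoc]; rfl
          have hcol2 : cfVal ((r ++ [e]) ++ [b + (c - c.sign)]) = cfVal (r ++ [e + (b + (c - c.sign))]) := by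
            rw [hlist2]
            apply cf_collapse r e (b + (c - c.sign))
            rw [hbc]
            rcases hsgn with ⟨_, h2⟩ | ⟨_, h2⟩ <;> rw [h2] <;> [right; left] <;> norm_num
          have hes : (e + (b + (c - c.sign))).natAbs = e.natAbs + 1 ∨
              (e + (b + (c - c.sign))).natAbs = e.natAbs - 1 := by
            rcases hsgn with ⟨h1, h2⟩ | ⟨h1, h2⟩ <;> rw [h2] <;> omega
          have heabs : 2 ≤ |e + (b + (c - c.sign))| := by
            rw [abs_eq_natAbs']; exact_mod_cast (by omega : 2 ≤ (e + (b + (c-c.sign))).natAbs)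
          have hevr : ∀ x ∈ r, Even x ∧ 2 ≤ |x| := fun x hx => hev x (by simp [hx])
          have hchr : List.Chain' (fun a b => ¬(|a| = 2 ∧ |b| = 2)) r := by
            simp only [List.Chain', List.isChain_append] at hch
            have := hch.1
            exact this.1
          have hμ : (r.map Int.natAbs).sum + (e + (b + (c - c.sign))).natAbs + r.length ≤ N - 1 := by
            have hsum2 : (((r ++ [e]) ++ [b]).map Int.natAbs).sum
                = (r.map Int.natAbs).sum + e.natAbs + b.natAbs := by simp; ring
            rw [hsum2] at hN
            have hlen2 : ((r ++ [e]) ++ [b]).length = r.length + 2 := by simp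
            rw [hlen2] at hN
            omega
          have hv0 := ih (N - 1) (by omega) r (e + (b + (c - c.sign))) hμ hevr hchr heabs
          rw [if_neg (by intro hh; omega)] at hv0
          have hv : DepthRel (cfVal (((r ++ [e]) ++ [b]) ++ [c - c.sign])) (r.length + 1) := by
            rw [show ((r ++ [e]) ++ [b]) ++ [c - c.sign] = (r ++ [e]) ++ [b, c - c.sign] by
              rw [List.append_assoc ((r ++ [e])) [b] [c - c.sign]]; rfl]
            rw [cf_collapse (r ++ [e]) b (c - c.sign) hcs, hcol2]
            exact hv0
          have hstep := DepthRel.step _ _ _ ((r ++ [e]).length + 1) (r.length + 1) hden hpar hu hv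
          have : 1 + min ((r ++ [e]).length + 1) (r.length + 1) = ((r ++ [e]) ++ [b]).length := by
            simp; omega
          rw [this] at hstep
          exact hstep
      · -- non-exceptional, |c| = 2
        rw [if_neg (by
          rintro ⟨_, hlast⟩
          rw [List.getLast?_concat] at hlast
          exact hbad (by injection hlast))]
        have hbs2 : 2 ≤ (b + (c - c.sign)).natAbs ∧ (b + (c - c.sign)).natAbs ≠ 2 := by
          constructor <;>
          · rcases hsgn with ⟨h1, h2⟩ | ⟨h1, h2⟩ <;> rw [h2] <;> omega
        have hbabs : 2 ≤ |b + (c - c.sign)| := by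
          rw [abs_eq_natAbs']; exact_mod_cast (by omega : 2 ≤ (b + (c - c.sign)).natAbs)
        have hμ : (q.map Int.natAbs).sum + (b + (c - c.sign)).natAbs + q.length ≤ N - 1 := by
          rw [hsum, hlen] at hN
          have : (b + (c - c.sign)).natAbs ≤ b.natAbs + 1 := by
            rcases hsgn with ⟨h1, h2⟩ | ⟨h1, h2⟩ <;> rw [h2] <;> omega
          omega
        have hv0 := ih (N - 1) (by omega) q (b + (c - c.sign)) hμ hevq hchq hbabs
        rw [if_neg (by intro hh; exact hbs2.2 hh.1)] at hv0
        have hv : DepthRel (cfVal ((q ++ [b]) ++ [c - c.sign])) (q.length + 1) := by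
          rw [hcol]; exact hv0
        have hstep := DepthRel.step _ _ _ (q.length + 1) (q.length + 1) hden hpar hu hv
        have : 1 + min (q.length + 1) (q.length + 1) = (q ++ [b]).length + 1 := by
          rw [min_self]; simp; omega
        rw [this] at hstep
        exact hstep
    · -- |c| ≥ 3
      rw [if_neg (by tauto)]
      have h4 : 2 ≤ |c - c.sign| := by
        rw [abs_eq_natAbs']; exact_mod_cast (by omega : 2 ≤ (c - c.sign).natAbs)
      have hμ : ((q ++ [b]).map Int.natAbs).sum + (c - c.sign).natAbs + (q ++ [b]).length ≤ N - 1 := by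
        rw [hcsub]; omega
      have hv0 := ih (N - 1) (by omega) (q ++ [b]) (c - c.sign) hμ hev hch h4
      obtain ⟨kv, hv, hkv⟩ : ∃ kv, DepthRel (cfVal ((q ++ [b]) ++ [c - c.sign])) kv ∧
          (q ++ [b]).length ≤ kv := by
        by_cases hI : (c - c.sign).natAbs = 2 ∧ (q ++ [b]).getLast? = some (-(c - c.sign))
        · rw [if_pos hI] at hv0; exact ⟨_, hv0, le_refl _⟩
        · rw [if_neg hI] at hv0; exact ⟨_, hv0, by omega⟩
      have hstep := DepthRel.step _ _ _ ((q ++ [b]).length) kv hden hpar ?_ hv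
      · have : 1 + min ((q ++ [b]).length) kv = (q ++ [b]).length + 1 := by
          rw [min_eq_left hkv]; omega
        rw [this] at hstep
        exact hstep
      · rw [hlen]; exact hu

/-- If `a = (a₁, …, aₙ)` is a nonempty list of even integers with `|a₁| ≥ 4`,
`|aᵢ| ≥ 2` for all `i`, and no two consecutive entries both of absolute value `2`,
then `d([a]) = n`. -/
theorem stmt13 (L : List ℤ) (hL : L ≠ []) (hev : ∀ a ∈ L, Even a ∧ 2 ≤ |a|)
    (h1 : 4 ≤ |L.head hL|)
    (h2 : List.Chain' (fun a b => ¬(|a| = 2 ∧ |b| = 2)) L) :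
    fareyDepth (cfVal L) = L.length := by
  rcases concat_cases L with rfl | ⟨p, c, rfl⟩
  · exact absurd rfl hL
  · have hev' : ∀ x ∈ p, Even x ∧ 2 ≤ |x| := fun x hx => hev x (by simp [hx])
    have hc : 2 ≤ |c| := (hev c (by simp)).2
    have hch : List.Chain' (fun a b => ¬(|a| = 2 ∧ |b| = 2)) p :=
      (List.isChain_append.mp h2).1
    have hmain := mainA ((p.map Int.natAbs).sum + c.natAbs + p.length) p c
      (le_refl _) hev' hch hc
    have hcond : ¬(c.natAbs = 2 ∧ p.getLast? = some (-c)) := by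
      rintro ⟨h1x, h2x⟩
      simp only [List.Chain', List.isChain_append] at h2
      have := h2.2.2 (-c) h2x c (by simp)
      exact this ⟨by rw [abs_eq_natAbs', Int.natAbs_neg, h1x]; norm_num,
        by rw [abs_eq_natAbs', h1x]; norm_num⟩
    rw [if_neg hcond] at hmain
    rw [fareyDepth_eq hmain]
    simp
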